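/- arXiv:0808.1829 — 2 statements merged into one kernel-verified Lean document; each statement's English description precedes it below -/
import Mathlib

section
/- For m ≥ 1 and real x with 0 ≤ x < 1, the Euler polynomial satisfies E_m(x) = 2·m! · ∑_{n=-∞}^{∞} e^{(2n+1)πix}/((2n+1)πi)^{m+1}. -/
open scoped BigOperators Nat
open PowerSeries Real Complex

/-- The Euler numbers, defined by the generating function `2 / (e^t + 1)`. -/
noncomputable def eulerNumber (n : ℕ) : ℝ :=
  (n ! : ℝ) * PowerSeries.coeff n (2 * (PowerSeries.exp ℝ + 1)⁻¹)

/-- The Euler polynomials, defined by the generating function `(2 / (e^t + 1)) * e^{x t}`. -/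
noncomputable def eulerPoly (n : ℕ) (x : ℝ) : ℝ :=
  (n ! : ℝ) * PowerSeries.coeff n
    (2 * (PowerSeries.exp ℝ + 1)⁻¹ * PowerSeries.rescale x (PowerSeries.exp ℝ))

/-- Stirling numbers of the second kind. -/
def stirling2 : ℕ → ℕ → ℕ
  | 0, 0 => 1
  | 0, _ + 1 => 0
  | _ + 1, 0 => 0
  | m + 1, n + 1 => (n + 1) * stirling2 m (n + 1) + stirling2 m n


lemma euler_bernoulli_series (x : ℝ) :
    PowerSeries.X * (2 * (PowerSeries.exp ℝ + 1)⁻¹ * PowerSeries.rescale x (PowerSeries.exp ℝ))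
      = 2 * ((PowerSeries.mk fun n => Polynomial.aeval x ((1 / n ! : ℚ) • Polynomial.bernoulli n))
          - PowerSeries.rescale 2 (PowerSeries.mk fun n =>
              Polynomial.aeval (x/2) ((1 / n ! : ℚ) • Polynomial.bernoulli n))) := by
  set e := PowerSeries.exp ℝ with he
  set Gx := (PowerSeries.mk fun n => Polynomial.aeval x ((1 / n ! : ℚ) • Polynomial.bernoulli n))
  set G2 := (PowerSeries.mk fun n => Polynomial.aeval (x/2) ((1 / n ! : ℚ) • Polynomial.bernoulli n))
  have hconst : constantCoeff (e + 1) ≠ 0 := by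
    simp [he, constantCoeff_exp]
  have hinv : (e + 1)⁻¹ * (e + 1) = 1 := PowerSeries.inv_mul_cancel _ hconst
  have hc : ((e - 1) * (e + 1)) ≠ 0 := by
    apply mul_ne_zero
    · intro h
      have := congrArg (coeff 1) h
      simp [he, coeff_exp] at this
    · intro h
      have := congrArg (constantCoeff) h
      simp [he, constantCoeff_exp] at this
  apply mul_right_cancel₀ hc
  have hGx : Gx * (e - 1) = PowerSeries.X * rescale x e :=
    Polynomial.bernoulli_generating_function (A := ℝ) x
  have hee : e * e = rescale 2 e := by
    have h := exp_mul_exp_eq_exp_add (1 : ℝ) 1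
    norm_num [rescale_one] at h
    exact h
  have hR : (rescale (2:ℝ) G2) * (rescale (2:ℝ) e - 1) = 2 * (PowerSeries.X * rescale x e) := by
    have h := congrArg (rescale (2:ℝ)) (Polynomial.bernoulli_generating_function (A := ℝ) (x/2))
    rw [map_mul, map_sub, map_one, map_mul, rescale_X, rescale_rescale] at h
    have h2 : (x / 2 * 2) = x := by ring
    have hC : (C) (2:ℝ) = 2 := by rw [map_ofNat]
    rw [h2, hC] at h
    rw [h]; ring
  calc PowerSeries.X * (2 * (e + 1)⁻¹ * rescale x e) * ((e - 1) * (e + 1))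
      = 2 * (PowerSeries.X * rescale x e) * (e - 1) * ((e + 1)⁻¹ * (e + 1)) := by ring
    _ = 2 * (PowerSeries.X * rescale x e) * (e - 1) := by rw [hinv, mul_one]
    _ = 2 * ((Gx * (e - 1)) * (e + 1) - rescale 2 G2 * (e * e - 1)) := by
        rw [hGx, hee, hR]; ring
    _ = 2 * (Gx - rescale 2 G2) * ((e - 1) * (e + 1)) := by ring

lemma aeval_smul_bernoulli (n : ℕ) (x : ℝ) :
    Polynomial.aeval x ((1 / n ! : ℚ) • Polynomial.bernoulli n)
      = (1 / (n ! : ℝ)) * bernoulliFun n x := by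
  rw [map_smul, bernoulliFun, Polynomial.eval_map, ← Polynomial.aeval_def]
  rw [Rat.smul_def]
  push_cast
  ring

lemma euler_eq_bernoulli (m : ℕ) (x : ℝ) :
    ((m:ℝ)+1) * eulerPoly m x
      = 2 * (bernoulliFun (m+1) x - 2^(m+1) * bernoulliFun (m+1) (x/2)) := by
  have h := congrArg (coeff (m+1)) (euler_bernoulli_series x)
  rw [coeff_succ_X_mul] at h
  rw [show (2 : ℝ⟦X⟧) = C (2:ℝ) from (map_ofNat _ 2).symm, coeff_C_mul, map_sub, coeff_rescale,
    coeff_mk, coeff_mk, aeval_smul_bernoulli, aeval_smul_bernoulli] at h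
  rw [show ((C) (2:ℝ) : ℝ⟦X⟧) = 2 from map_ofNat _ 2] at h
  rw [eulerPoly, h, Nat.factorial_succ]
  have hfac : ((m ! : ℝ)) ≠ 0 := Nat.cast_ne_zero.mpr (Nat.factorial_ne_zero m)
  have hm1 : ((m:ℝ) + 1) ≠ 0 := by positivity
  push_cast
  field_simp

theorem euler_poly_fourier_series (m : ℕ) (hm : 1 ≤ m) (x : ℝ) (hx0 : 0 ≤ x) (hx1 : x < 1) :
    (eulerPoly m x : ℂ) = 2 * (m ! : ℂ) *
      ∑' n : ℤ, Complex.exp ((2 * n + 1) * π * Complex.I * x) / ((2 * n + 1) * π * Complex.I) ^ (m + 1) := by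
  have hk : 2 ≤ m + 1 := by omega
  have hx2 : x / 2 ∈ Set.Icc (0:ℝ) 1 := ⟨by linarith, by linarith⟩
  have hxI : x ∈ Set.Icc (0:ℝ) 1 := ⟨hx0, le_of_lt hx1⟩
  have hA := hasSum_one_div_pow_mul_fourier_mul_bernoulliFun hk hx2
  have hB := hasSum_one_div_pow_mul_fourier_mul_bernoulliFun hk hxI
  set k := m + 1 with hkdef
  set a : ℤ → ℂ := fun n => 1 / (n:ℂ)^k * fourier n ((x/2 : ℝ) : UnitAddCircle) with ha
  set SA : ℂ := -(2 * π * I) ^ k / k ! * bernoulliFun k (x/2) with hSA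
  set SB : ℂ := -(2 * π * I) ^ k / k ! * bernoulliFun k x with hSB
  have hEven : HasSum (fun n : ℤ => a (2*n)) ((2:ℂ)⁻¹^k * SB) := by
    refine (hB.mul_left ((2:ℂ)⁻¹^k)).congr_fun fun n => ?_
    simp only [ha]
    rw [fourier_coe_apply, fourier_coe_apply]
    push_cast
    rw [show 2 * ↑π * I * (2 * (n:ℂ)) * (↑x / 2) / 1 = 2 * ↑π * I * n * x / 1 by ring]
    rw [mul_pow, ← mul_assoc]
    congr 1
    rw [inv_pow, one_div, one_div]
    exact mul_inv _ _
  have hinj2 : Function.Injective (fun n : ℤ => 2*n) := fun a b h => by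
    simpa using h
  have hEvenExt : HasSum (fun n : ℤ => if Even n then a n else 0) ((2:ℂ)⁻¹^k * SB) := by
    refine (Function.Injective.hasSum_iff hinj2 ?_).mp (hEven.congr_fun fun n => ?_)
    · intro n hn
      rw [if_neg]
      intro ⟨c, hc⟩
      exact hn ⟨c, show 2*c = n by omega⟩
    · simp only [Function.comp]
      rw [if_pos (even_two_mul n)]
  have hOdd : HasSum (fun n : ℤ => a n - (if Even n then a n else 0)) (SA - (2:ℂ)⁻¹^k * SB) :=
    hA.sub hEvenExt
  have hinj21 : Function.Injective (fun n : ℤ => 2*n+1) := fun a b h => by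
    simpa using h
  have hOdd2 : HasSum (fun n : ℤ => a (2*n+1)) (SA - (2:ℂ)⁻¹^k * SB) := by
    refine ((Function.Injective.hasSum_iff hinj21 ?_).mpr hOdd).congr_fun fun n => ?_
    · intro n hn
      have he : Even n := by
        rcases Int.even_or_odd n with h | ⟨c, hc⟩
        · exact h
        · exact absurd (⟨c, show 2*c+1 = n by omega⟩ : n ∈ Set.range fun n => 2*n+1) hn
      rw [if_pos he, sub_self]
    · simp only [Function.comp]
      rw [if_neg (by rintro ⟨c, hc⟩; omega), sub_zero]
  have hOdd3 : HasSum (fun n : ℤ => a (2*n+1) / (↑π * I)^k)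
      ((SA - (2:ℂ)⁻¹^k * SB) / (↑π * I)^k) := hOdd2.div_const _
  have hterm : ∀ n : ℤ, a (2*n+1) / (↑π * I)^k
      = Complex.exp ((2 * n + 1) * π * Complex.I * x) / ((2 * n + 1) * π * Complex.I) ^ k := by
    intro n
    simp only [ha]
    rw [fourier_coe_apply]
    push_cast
    rw [show 2 * ↑π * I * (2 * (n:ℂ) + 1) * (↑x / 2) / 1 = (2 * n + 1) * π * I * x by ring]
    rw [show ((2 * (n:ℂ) + 1) * ↑π * I) ^ k = (2 * (n:ℂ) + 1)^k * (↑π * I)^k by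
      rw [← mul_pow]; ring_nf]
    rw [mul_comm (1 / _), mul_one_div, div_div]
  have htsum : ∑' n : ℤ, Complex.exp ((2 * n + 1) * π * Complex.I * x)
        / ((2 * n + 1) * π * Complex.I) ^ k = (SA - (2:ℂ)⁻¹^k * SB) / (↑π * I)^k := by
    rw [← (hOdd3.congr_fun fun n => (hterm n).symm).tsum_eq]
  rw [htsum]
  have hπ : (π:ℂ) ≠ 0 := Complex.ofReal_ne_zero.mpr Real.pi_ne_zero
  have hπI : ((π:ℂ) * I) ^ k ≠ 0 := pow_ne_zero _ (mul_ne_zero hπ I_ne_zero)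
  have hfac : ((k ! : ℕ) : ℂ) ≠ 0 := Nat.cast_ne_zero.mpr (Nat.factorial_ne_zero _)
  have hm1 : ((m:ℂ) + 1) ≠ 0 := by
    have : ((m+1 : ℕ) : ℂ) ≠ 0 := Nat.cast_ne_zero.mpr (Nat.succ_ne_zero m)
    push_cast at this; exact this
  apply mul_left_cancel₀ hm1
  have hC : ((m:ℂ)+1) * (eulerPoly m x : ℂ)
      = 2 * ((bernoulliFun k x : ℂ) - 2^k * (bernoulliFun k (x/2) : ℂ)) := by
    have h := euler_eq_bernoulli m x
    rw [hkdef]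
    exact_mod_cast congrArg Complex.ofReal h
  have hfs : ((k ! : ℕ) : ℂ) = ((m:ℂ)+1) * (m ! : ℂ) := by
    rw [hkdef, Nat.factorial_succ]; push_cast; ring
  have h2 : ((2:ℂ) * ↑π * I)^k = 2^k * ((π:ℂ)*I)^k := by rw [← mul_pow]; ring_nf
  have h2k : ((2:ℂ))^k ≠ 0 := pow_ne_zero _ two_ne_zero
  have hmf : ((m ! : ℕ) : ℂ) ≠ 0 := Nat.cast_ne_zero.mpr (Nat.factorial_ne_zero _)
  have key : SA - ((2:ℂ)⁻¹)^k * SB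
      = ((π:ℂ)*I)^k * (((bernoulliFun k x : ℂ) - 2^k * (bernoulliFun k (x/2) : ℂ))
          / (((m:ℂ)+1) * (m ! : ℂ))) := by
    rw [hSA, hSB, h2, hfs, inv_pow]
    field_simp
    ring
  rw [hC, key]
  field_simp
end

section
/- For m ≥ 1, the Euler number satisfies E_m = 2·m! · ∑_{n=-∞}^{∞} 1/((2n+1)πi)^{m+1}, the sum ranging over all integers n. -/
open scoped BigOperators Nat
open PowerSeries Real Complex

lemma lemA : (bernoulliPowerSeries ℝ - rescale 2 (bernoulliPowerSeries ℝ)) * (exp ℝ + 1) = X := by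
  have h1 : bernoulliPowerSeries ℝ * (exp ℝ - 1) = X := bernoulliPowerSeries_mul_exp_sub_one ℝ
  have h2 : rescale (2:ℝ) (bernoulliPowerSeries ℝ) * (exp ℝ ^ 2 - 1) = C (2:ℝ) * X := by
    have := congrArg (rescale (2:ℝ)) h1
    rw [map_mul, map_sub, map_one, rescale_X] at this
    rw [exp_pow_eq_rescale_exp]
    push_cast
    exact this
  have hne : exp ℝ - 1 ≠ 0 := by
    intro h
    have := congrArg (coeff 1) h
    simp [coeff_exp] at this
  apply mul_right_cancel₀ hne
  have : (bernoulliPowerSeries ℝ - rescale 2 (bernoulliPowerSeries ℝ)) * (exp ℝ + 1) * (exp ℝ - 1)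
      = bernoulliPowerSeries ℝ * (exp ℝ - 1) * (exp ℝ + 1)
        - rescale 2 (bernoulliPowerSeries ℝ) * (exp ℝ ^ 2 - 1) := by ring
  rw [this, h1, h2]
  have hC : (C (2:ℝ)) = (2 : ℝ⟦X⟧) := map_ofNat _ 2
  rw [hC]; ring

lemma lemC (m : ℕ) :
    eulerNumber m = 2 * (1 - 2 ^ (m+1)) * (bernoulli (m+1) : ℝ) / (m+1) := by
  have hc : constantCoeff (exp ℝ + 1) ≠ 0 := by
    simp [constantCoeff_exp]
  have key : X * (2 * (exp ℝ + 1)⁻¹) =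
      2 * (bernoulliPowerSeries ℝ - rescale 2 (bernoulliPowerSeries ℝ)) := by
    have h := congrArg (· * (exp ℝ + 1)⁻¹) lemA
    simp only [mul_assoc, PowerSeries.mul_inv_cancel _ hc, mul_one] at h
    rw [h]; ring
  have hcoeff := congrArg (coeff (m+1)) key
  rw [coeff_succ_X_mul] at hcoeff
  have h2 : ∀ g : ℝ⟦X⟧, (2 : ℝ⟦X⟧) * g = C (2:ℝ) * g := by
    intro g; rw [map_ofNat]
  rw [h2, coeff_C_mul] at hcoeff
  rw [h2, coeff_C_mul, map_sub, coeff_rescale] at hcoeff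
  have hb : coeff (m+1) (bernoulliPowerSeries ℝ) = (bernoulli (m+1) : ℝ) / ((m+1)! : ℝ) := by
    simp [bernoulliPowerSeries, coeff_mk]
  rw [hb] at hcoeff
  have hfac : ((m+1)! : ℝ) = (m+1) * (m ! : ℝ) := by
    rw [Nat.factorial_succ]; push_cast; ring
  have hm : (m ! : ℝ) ≠ 0 := by positivity
  rw [eulerNumber, h2, coeff_C_mul, hcoeff, hfac]
  have hm1 : ((m : ℝ) + 1) ≠ 0 := by positivity
  field_simp

lemma lemEven (m : ℕ) (hm : Odd (m+1)) :
    ∑' n : ℤ, 1 / ((2 * (n:ℂ) + 1) * π * Complex.I) ^ (m + 1) = 0 := by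
  set f : ℤ → ℂ := fun n => 1 / ((2 * (n:ℂ) + 1) * π * Complex.I) ^ (m + 1) with hf
  have key : ∀ n : ℤ, f (-1 - n) = - f n := by
    intro n
    simp only [hf]
    have : (2 * ((-1 - n : ℤ) : ℂ) + 1) = -(2 * (n:ℂ) + 1) := by push_cast; ring
    rw [this]
    rw [show -(2 * (n:ℂ) + 1) * π * Complex.I = -((2 * (n:ℂ) + 1) * π * Complex.I) by ring]
    rw [hm.neg_pow]
    rw [one_div, one_div, inv_neg]
  have h1 : ∑' n : ℤ, f ((Equiv.subLeft (-1 : ℤ)) n) = ∑' n, f n :=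
    (Equiv.subLeft (-1 : ℤ)).tsum_eq f
  simp only [Equiv.subLeft_apply, key] at h1
  rw [tsum_neg] at h1
  have h2 : (2:ℂ) * ∑' n, f n = 0 := by linear_combination -h1
  exact (mul_eq_zero.mp h2).resolve_left two_ne_zero

lemma lemOddReal (k : ℕ) (hk : k ≠ 0) :
    HasSum (fun n : ℕ => 1 / (2*(n:ℝ)+1) ^ (2*k))
      ((1 - ((2:ℝ)^(2*k))⁻¹) *
        ((-1 : ℝ) ^ (k + 1) * (2 : ℝ) ^ (2 * k - 1) * π ^ (2 * k) *
        bernoulli (2 * k) / (2 * k)!)) := by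
  set Z := ((-1 : ℝ) ^ (k + 1) * (2 : ℝ) ^ (2 * k - 1) * π ^ (2 * k) *
        (bernoulli (2 * k) : ℝ) / ((2 * k)! : ℝ)) with hZ
  have H : HasSum (fun n : ℕ => 1 / (n : ℝ) ^ (2 * k)) Z := hasSum_zeta_nat hk
  set fe : ℕ → ℝ := fun n => if Even n then 1 / (n : ℝ) ^ (2*k) else 0 with hfe
  have hi : Function.Injective (fun n : ℕ => 2 * n) := fun a b h => by simpa using h
  have Heven : HasSum fe (((2:ℝ)^(2*k))⁻¹ * Z) := by
    apply (hi.hasSum_iff ?_).mp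
    · have hcomp : (fe ∘ fun n : ℕ => 2 * n) =
          fun n : ℕ => ((2:ℝ)^(2*k))⁻¹ * (1/(n:ℝ)^(2*k)) := by
        funext n
        have he : Even (2*n) := even_two_mul n
        simp only [Function.comp_apply, hfe, if_pos he]
        push_cast
        rw [mul_pow, div_eq_mul_inv, div_eq_mul_inv, mul_inv, one_mul, one_mul]
        try ring
      rw [hcomp]
      exact H.mul_left _
    · intro x hx
      apply if_neg
      rintro ⟨c, rfl⟩
      exact hx ⟨c, by dsimp only; omega⟩
  have Hodd : HasSum (fun n : ℕ => 1 / (n : ℝ) ^ (2*k) - fe n) (Z - ((2:ℝ)^(2*k))⁻¹ * Z) :=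
    H.sub Heven
  have hj : Function.Injective (fun n : ℕ => 2 * n + 1) := fun a b h => by simpa using h
  have key := (hj.hasSum_iff (f := fun n : ℕ => 1 / (n : ℝ) ^ (2*k) - fe n) ?_).mpr Hodd
  · convert key using 1
    · funext n
      have ho : ¬ Even (2*n+1) := by simp [Nat.even_add_one, parity_simps]
      simp only [Function.comp_apply, hfe, if_neg ho]
      push_cast
      ring
    · rw [hZ]; ring
  · intro x hx
    rcases Nat.even_or_odd x with he | ho
    · simp only [hfe, if_pos he]; ring
    · obtain ⟨c, rfl⟩ := ho
      exact absurd ⟨c, rfl⟩ hx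

lemma lemOddInt (k : ℕ) (hk : k ≠ 0) :
    HasSum (fun n : ℤ => 1 / ((2 * (n:ℂ) + 1) * π * Complex.I) ^ (2*k))
      (2 * ((1 - ((2:ℂ)^(2*k))⁻¹) *
        ((-1 : ℂ) ^ (k + 1) * (2 : ℂ) ^ (2 * k - 1) * (π:ℂ) ^ (2 * k) *
        (bernoulli (2 * k) : ℂ) / ((2 * k)! : ℂ))) * (((π:ℂ) * Complex.I) ^ (2*k))⁻¹) := by
  set O : ℝ := ((1 - ((2:ℝ)^(2*k))⁻¹) *
        ((-1 : ℝ) ^ (k + 1) * (2 : ℝ) ^ (2 * k - 1) * π ^ (2 * k) *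
        (bernoulli (2 * k) : ℝ) / ((2 * k)! : ℝ))) with hO
  have Hr := lemOddReal k hk
  have Hc : HasSum (fun n : ℕ => 1 / (2*(n:ℂ)+1) ^ (2*k)) (O : ℂ) := by
    have := Complex.ofRealCLM.hasSum Hr
    convert this using 2 with n
    push_cast
    simp
    rw [hO, Complex.ofRealCLM_apply]
  have HO : ((O : ℂ)) = (1 - ((2:ℂ)^(2*k))⁻¹) *
        ((-1 : ℂ) ^ (k + 1) * (2 : ℂ) ^ (2 * k - 1) * (π:ℂ) ^ (2 * k) *
        (bernoulli (2 * k) : ℂ) / ((2 * k)! : ℂ)) := by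
    rw [hO]; push_cast; ring
  set g : ℤ → ℂ := fun n => 1 / (2 * (n:ℂ) + 1) ^ (2*k) with hg
  have Hz : HasSum g ((O:ℂ) + (O:ℂ)) := by
    apply HasSum.of_nat_of_neg_add_one
    · have : (fun n : ℕ => g (n:ℤ)) = fun n : ℕ => 1 / (2*(n:ℂ)+1) ^ (2*k) := by
        funext n; simp [hg]
      rw [this]
      exact Hc
    · convert Hc using 2 with n
      simp only [hg]
      have h1 : (2 * (((-((n:ℕ)+1)) : ℤ) : ℂ) + 1) = -(2*(n:ℂ)+1) := by push_cast; ring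
      rw [h1, show -(2*(n:ℂ)+1) = (-1) * (2*(n:ℂ)+1) by ring, mul_pow]
      rw [show (-1:ℂ)^(2*k) = 1 by rw [pow_mul]; norm_num, one_mul]
  have Hfinal := Hz.mul_right ((((π:ℂ) * Complex.I) ^ (2*k))⁻¹)
  convert Hfinal using 2 with n
  · rfl
  · simp only [hg]
    rw [show (2 * (n:ℂ) + 1) * π * Complex.I = (2 * (n:ℂ) + 1) * ((π:ℂ) * Complex.I) by ring,
      mul_pow, one_div, mul_inv, ← one_div]
  · rw [HO]; ring

theorem euler_number_series (m : ℕ) (hm : 1 ≤ m) :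
    (eulerNumber m : ℂ) = 2 * (m ! : ℂ) *
      ∑' n : ℤ, 1 / ((2 * n + 1) * π * Complex.I) ^ (m + 1) := by
  rcases Nat.even_or_odd m with he | ho
  · have hodd : Odd (m+1) := Even.add_one he
    rw [lemEven m hodd, lemC m]
    have hb : bernoulli (m+1) = 0 := by
      rw [bernoulli_eq_bernoulli'_of_ne_one (by omega)]
      exact bernoulli'_eq_zero_of_odd hodd (by omega)
    rw [hb]
    push_cast
    ring
  · obtain ⟨j, rfl⟩ := ho
    set k := j + 1 with hkj
    have h2k : 2 * j + 1 + 1 = 2 * k := by omega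
    have hk : k ≠ 0 := by omega
    have hts := (lemOddInt k hk).tsum_eq
    rw [h2k, hts, lemC, h2k]
    have hI : (Complex.I) ^ (2*k) = (-1:ℂ)^k := by rw [pow_mul, Complex.I_sq]
    have hpi : ((π:ℂ)) ≠ 0 := by
      simpa using Real.pi_ne_zero
    have hfac : ((2*k)! : ℂ) = (2*k) * ((2*j+1)! : ℂ) := by
      rw [show 2*k = (2*j+1)+1 by omega, Nat.factorial_succ]
      rw [hkj]
      push_cast
      ring
    have hpow : (2:ℂ)^(2*k-1) * 2 = 2^(2*k) := by
      rw [← pow_succ]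
      congr 1
      try omega
    have hA : ((-1:ℂ)^k) * ((-1:ℂ)^k) = 1 := by
      rw [← pow_add]
      exact Even.neg_one_pow ⟨k, rfl⟩
    rw [mul_pow, hI]
    push_cast
    have h2 : (2:ℂ) ^ (2*k) ≠ 0 := pow_ne_zero _ two_ne_zero
    have hfj : ((2*j+1)! : ℂ) ≠ 0 :=
      Nat.cast_ne_zero.mpr (Nat.factorial_ne_zero _)
    have hk0 : ((2*(k:ℂ))) ≠ 0 :=
      mul_ne_zero two_ne_zero (Nat.cast_ne_zero.mpr hk)
    have hppow : ((π:ℂ))^(2*k) ≠ 0 := pow_ne_zero _ hpi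
    have hB : ((-1:ℂ)^k) ≠ 0 := by
      intro h; simpa [h] using hA
    rw [pow_succ (-1:ℂ) k]
    field_simp
    rw [hfac]
    have hjk : (2*(j:ℂ)+1+1) = 2*(k:ℂ) := by rw [hkj]; push_cast; ring
    have hden : (2:ℂ) ^ (2*k) * (2 * (k:ℂ) * ((2*j+1)! : ℂ)) * ((π:ℂ)^(2*k) * (-1)^k) ≠ 0 :=
      mul_ne_zero (mul_ne_zero h2 (mul_ne_zero hk0 hfj)) (mul_ne_zero hppow hB)
    rw [hjk, ← hpow]
    field_simp
    ring
end
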